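/- Let (M,g) be a perfect fluid space-time of dimension n ≥ 4 with R_{kl} = A g_{kl} + B u_k u_l, u unit timelike, and ∇_m C_{jkl}{}^m = 0. Then the 1-form B u is closed: ∇_k(B u_j) = ∇_j(B u_k). -/
import Mathlib


/-!
STATEMENT 11.  Perfect fluid space-time of dimension n ≥ 4 with divergence-free
Weyl tensor.  Then the 1-form B u is closed: ∇_k(B u_j) = ∇_j(B u_k).
Component-level formalization with the same conventions and structural hypotheses
as in statements 2 and 3; by the Leibniz rule ∇_k(B u_j) = (∇_k B) u_j + B ∇_k u_j.
-/
theorem perfectFluid_Bu_closed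
    (n : ℕ) (hn : 4 ≤ n) (M : Type*)
    (g ginv : M → Fin n → Fin n → ℝ)
    (A B : M → ℝ) (DA DB : M → Fin n → ℝ)
    (u : M → Fin n → ℝ) (Du : M → Fin n → Fin n → ℝ)
    (hg : ∀ x i j, g x i j = g x j i)
    (hginv : ∀ x i j, ∑ m, ginv x i m * g x m j = if i = j then (1:ℝ) else 0)
    (hginvsymm : ∀ x i j, ginv x i j = ginv x j i)
    -- u is a unit timelike vector field: u^j u_j = -1
    (hunit : ∀ x, ∑ i, ∑ j, ginv x i j * u x i * u x j = -1)
    -- u has constant length, hence u^l ∇_k u_l = 0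
    (hDu : ∀ x k, ∑ l, ∑ m, ginv x l m * u x m * Du x k l = 0)
    -- contracted Bianchi identity ∇^m R_{jm} = (1/2)∇_j R
    (hBianchi : ∀ x j, ∑ a, ∑ m, ginv x a m *
        (DA x a * g x m j + DB x a * u x m * u x j
          + B x * (Du x a m * u x j + u x m * Du x a j))
      = (1/2) * ((n:ℝ) * DA x j - DB x j))
    -- ∇_m C_{jkl}{}^m = 0, in its equivalent Codazzi form for the Ricci tensor
    (hWeyl : ∀ x k l j,
        (DA x k * g x j l + DB x k * u x j * u x l
          + B x * (Du x k j * u x l + u x j * Du x k l))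
        - (DA x l * g x j k + DB x l * u x j * u x k
          + B x * (Du x l j * u x k + u x j * Du x l k))
      = (1/(2*((n:ℝ) - 1))) * (g x j l * ((n:ℝ) * DA x k - DB x k)
          - g x j k * ((n:ℝ) * DA x l - DB x l))) :
    -- conclusion: ∇_k(B u_j) = ∇_j(B u_k)
    ∀ x k j, DB x k * u x j + B x * Du x k j = DB x j * u x k + B x * Du x j k := by
  intro x k j
  have hN4 : (4:ℝ) ≤ (n:ℝ) := by exact_mod_cast hn
  set uc : Fin n → ℝ := fun i => ∑ m, ginv x i m * u x m with huc
  -- basic contractions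
  have e1 : ∀ l, (∑ i, uc i * g x i l) = u x l := by
    intro l
    calc ∑ i, uc i * g x i l
        = ∑ i, ∑ m, ginv x m i * u x m * g x i l := by
          refine Finset.sum_congr rfl fun i _ => ?_
          simp only [huc]
          rw [Finset.sum_mul]
          exact Finset.sum_congr rfl fun m _ => by rw [hginvsymm x i m]
      _ = ∑ m, ∑ i, ginv x m i * u x m * g x i l := Finset.sum_comm
      _ = ∑ m, u x m * ∑ i, ginv x m i * g x i l := by
          refine Finset.sum_congr rfl fun m _ => ?_
          rw [Finset.mul_sum]
          exact Finset.sum_congr rfl fun i _ => by ring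
      _ = ∑ m, u x m * (if m = l then (1:ℝ) else 0) := by
          refine Finset.sum_congr rfl fun m _ => ?_
          rw [hginv x m l]
      _ = u x l := by simp
  have e2 : (∑ i, uc i * u x i) = -1 := by
    calc ∑ i, uc i * u x i
        = ∑ i, ∑ m, ginv x i m * u x i * u x m := by
          refine Finset.sum_congr rfl fun i _ => ?_
          simp only [huc]
          rw [Finset.sum_mul]
          exact Finset.sum_congr rfl fun m _ => by ring
      _ = -1 := hunit x
  have e3 : ∀ kk, (∑ i, uc i * Du x kk i) = 0 := by
    intro kk
    calc ∑ i, uc i * Du x kk i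
        = ∑ i, ∑ m, ginv x i m * u x m * Du x kk i := by
          refine Finset.sum_congr rfl fun i _ => ?_
          simp only [huc]
          rw [Finset.sum_mul]
      _ = 0 := hDu x kk
  -- contraction helper with coefficients
  have hC : ∀ (k' l' : Fin n) (p1 p2 q r s : ℝ),
      (∑ i, uc i * (p1 * g x i l' + p2 * g x i k' + q * u x i + r * Du x k' i + s * Du x l' i))
        = p1 * u x l' + p2 * u x k' - q := by
    intro k' l' p1 p2 q r s
    have expand : p1 * (∑ i, uc i * g x i l') + p2 * (∑ i, uc i * g x i k')
          + q * (∑ i, uc i * u x i) + r * (∑ i, uc i * Du x k' i) + s * (∑ i, uc i * Du x l' i)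
        = ∑ i, uc i * (p1 * g x i l' + p2 * g x i k' + q * u x i + r * Du x k' i + s * Du x l' i) := by
      rw [Finset.mul_sum, Finset.mul_sum, Finset.mul_sum, Finset.mul_sum, Finset.mul_sum,
        ← Finset.sum_add_distrib, ← Finset.sum_add_distrib, ← Finset.sum_add_distrib,
        ← Finset.sum_add_distrib]
      exact Finset.sum_congr rfl fun i _ => by ring
    rw [← expand, e1 l', e1 k', e2, e3 k', e3 l']
    ring
  have hD : ∀ (l' : Fin n) (p q r s t : ℝ),
      (∑ i, uc i * (p * DA x i + q * DB x i + r * u x i + s * Du x i l' + t * Du x l' i))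
        = p * (∑ i, uc i * DA x i) + q * (∑ i, uc i * DB x i) - r + s * (∑ i, uc i * Du x i l') := by
    intro l' p q r s t
    have expand : p * (∑ i, uc i * DA x i) + q * (∑ i, uc i * DB x i)
          + r * (∑ i, uc i * u x i) + s * (∑ i, uc i * Du x i l') + t * (∑ i, uc i * Du x l' i)
        = ∑ i, uc i * (p * DA x i + q * DB x i + r * u x i + s * Du x i l' + t * Du x l' i) := by
      rw [Finset.mul_sum, Finset.mul_sum, Finset.mul_sum, Finset.mul_sum, Finset.mul_sum,
        ← Finset.sum_add_distrib, ← Finset.sum_add_distrib, ← Finset.sum_add_distrib,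
        ← Finset.sum_add_distrib]
      exact Finset.sum_congr rfl fun i _ => by ring
    rw [← expand, e2, e3 l']
    ring
  -- Step A: u^j-contraction of the Weyl (Codazzi) condition
  have star : ∀ k' l' : Fin n,
      DA x k' * u x l' - DA x l' * u x k'
        - (DB x k' * u x l' - DB x l' * u x k' + B x * (Du x k' l' - Du x l' k'))
      = (1/(2*((n:ℝ)-1))) * (u x l' * ((n:ℝ)*DA x k' - DB x k')
          - u x k' * ((n:ℝ)*DA x l' - DB x l')) := by
    intro k' l'
    have hs : (∑ i, uc i * ((DA x k') * g x i l' + (-(DA x l')) * g x i k'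
            + (DB x k' * u x l' - DB x l' * u x k' + B x * (Du x k' l' - Du x l' k')) * u x i
            + (B x * u x l') * Du x k' i + (-(B x * u x k')) * Du x l' i))
        = (∑ i, uc i * (((1/(2*((n:ℝ)-1))) * ((n:ℝ)*DA x k' - DB x k')) * g x i l'
            + (-((1/(2*((n:ℝ)-1))) * ((n:ℝ)*DA x l' - DB x l'))) * g x i k'
            + (0:ℝ) * u x i + (0:ℝ) * Du x k' i + (0:ℝ) * Du x l' i)) :=
      Finset.sum_congr rfl fun i _ => by linear_combination uc i * hWeyl x k' l' i
    rw [hC k' l' _ _ _ _ _, hC k' l' _ _ _ _ _] at hs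
    linear_combination hs
  -- Step B: further contraction with u^k
  have eqB : ∀ l' : Fin n,
      (∑ i, uc i * DA x i) * u x l' - (∑ i, uc i * DB x i) * u x l' + DA x l' - DB x l'
        - B x * (∑ i, uc i * Du x i l')
      = (1/(2*((n:ℝ)-1))) * (u x l' * ((n:ℝ)*(∑ i, uc i * DA x i) - (∑ i, uc i * DB x i))
          + ((n:ℝ)*DA x l' - DB x l')) := by
    intro l'
    have hs : (∑ i, uc i * ((u x l') * DA x i + (-(u x l')) * DB x i
            + (DB x l' - DA x l') * u x i + (-(B x)) * Du x i l' + (B x) * Du x l' i))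
        = (∑ i, uc i * (((1/(2*((n:ℝ)-1)))*(n:ℝ)*(u x l')) * DA x i
            + (-((1/(2*((n:ℝ)-1)))*(u x l'))) * DB x i
            + (-((1/(2*((n:ℝ)-1)))*((n:ℝ)*DA x l' - DB x l'))) * u x i
            + (0:ℝ) * Du x i l' + (0:ℝ) * Du x l' i)) :=
      Finset.sum_congr rfl fun i _ => by linear_combination uc i * star i l'
    rw [hD l' _ _ _ _ _, hD l' _ _ _ _ _] at hs
    linear_combination hs
  -- Step C: contracted Bianchi identity rewritten
  have eqC : ∀ l' : Fin n,
      DA x l' + u x l' * (∑ i, uc i * DB x i)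
        + B x * u x l' * (∑ i, ∑ m, ginv x i m * Du x i m)
        + B x * (∑ i, uc i * Du x i l')
      = (1/2) * ((n:ℝ)*DA x l' - DB x l') := by
    intro l'
    have inner : ∀ a : Fin n,
        (∑ m, ginv x a m * (DA x a * g x m l' + DB x a * u x m * u x l'
            + B x * (Du x a m * u x l' + u x m * Du x a l')))
        = DA x a * (if a = l' then (1:ℝ) else 0) + u x l' * (uc a * DB x a)
            + B x * u x l' * (∑ m, ginv x a m * Du x a m) + B x * (uc a * Du x a l') := by
      intro a
      have expand : DA x a * (∑ m, ginv x a m * g x m l')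
            + u x l' * ((∑ m, ginv x a m * u x m) * DB x a)
            + B x * u x l' * (∑ m, ginv x a m * Du x a m)
            + B x * ((∑ m, ginv x a m * u x m) * Du x a l')
          = ∑ m, ginv x a m * (DA x a * g x m l' + DB x a * u x m * u x l'
              + B x * (Du x a m * u x l' + u x m * Du x a l')) := by
        rw [Finset.mul_sum, Finset.sum_mul, Finset.mul_sum, Finset.mul_sum, Finset.sum_mul,
          Finset.mul_sum, ← Finset.sum_add_distrib, ← Finset.sum_add_distrib,
          ← Finset.sum_add_distrib]
        exact Finset.sum_congr rfl fun m _ => by ring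
      rw [← expand, hginv x a l']
    have h2 := (Finset.sum_congr rfl fun a _ => inner a).symm.trans (hBianchi x l')
    have h3 : (∑ a, (DA x a * (if a = l' then (1:ℝ) else 0) + u x l' * (uc a * DB x a)
          + B x * u x l' * (∑ m, ginv x a m * Du x a m) + B x * (uc a * Du x a l')))
        = DA x l' + u x l' * (∑ i, uc i * DB x i)
          + B x * u x l' * (∑ i, ∑ m, ginv x i m * Du x i m)
          + B x * (∑ i, uc i * Du x i l') := by
      have e0 : (∑ a, DA x a * (if a = l' then (1:ℝ) else 0)) = DA x l' := by simp
      rw [← e0, Finset.mul_sum, Finset.mul_sum, Finset.mul_sum,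
        ← Finset.sum_add_distrib, ← Finset.sum_add_distrib, ← Finset.sum_add_distrib]
    exact h3.symm.trans h2
  -- nonvanishing denominators
  have h2N : (2*((n:ℝ)-1)) ≠ 0 := by nlinarith
  have hc : (2*((n:ℝ)-1)) * (1/(2*((n:ℝ)-1))) = 1 := by
    rw [mul_one_div, div_self h2N]
  -- Step D: the gradient of γ = (n-2)A + B is proportional to u
  have hgam : ∀ l' : Fin n,
      ((n:ℝ)-2) * (((n:ℝ)-2)*DA x l' + DB x l')
        = u x l' * (((n:ℝ)-2)*(∑ i, uc i * DA x i) + (∑ i, uc i * DB x i)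
            + 2*((n:ℝ)-1)*(B x)*(∑ i, ∑ m, ginv x i m * Du x i m)) := by
    intro l'
    linear_combination (-(2*((n:ℝ)-1))) * eqB l' + (-(2*((n:ℝ)-1))) * eqC l'
      + (-(u x l' * ((n:ℝ)*(∑ i, uc i * DA x i) - (∑ i, uc i * DB x i))
          + ((n:ℝ)*DA x l' - DB x l'))) * hc
  -- conclusion
  have hQ : (((n:ℝ)-2) * (2*((n:ℝ)-1)))
      * ((DB x k * u x j + B x * Du x k j) - (DB x j * u x k + B x * Du x j k)) = 0 := by
    linear_combination (-(((n:ℝ)-2)*(2*((n:ℝ)-1)))) * star k j + u x j * hgam k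
      + (-(u x k)) * hgam j
      + (-(((n:ℝ)-2)*(u x j * ((n:ℝ)*DA x k - DB x k) - u x k * ((n:ℝ)*DA x j - DB x j)))) * hc
  have hfac : (((n:ℝ)-2) * (2*((n:ℝ)-1))) ≠ 0 := by nlinarith
  have hz := (mul_eq_zero.mp hQ).resolve_left hfac
  linarith [hz]
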